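/- arXiv:2106.08289 — 2 statements merged into one kernel-verified Lean document; each statement's English description precedes it below -/
import Mathlib

section
/- Let k be a field of characteristic zero, let K be an odd positive integer, set n = 2K, and let X = Z_n be the dihedral quandle (x▷y = 2y − x in Z_n). Let D be a derivation of the quandle algebra k[X], with matrix coefficients defined by D(e_t) = Σ_x c_t^x e_x. Then for all t, x, d ∈ Z_n (all index arithmetic in Z_n): c_{t+2d}^x = c_t^{2t+2d−x} and c_t^x = −c_t^{x+K}. -/
/-- The quandle algebra multiplication on `X →₀ k`, as a bilinear map,
determined on basis vectors by `e_x · e_y = e_{op x y}`. -/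
noncomputable def qmul {k X : Type*} [Field k] (op : X → X → X) :
    (X →₀ k) →ₗ[k] (X →₀ k) →ₗ[k] (X →₀ k) :=
  Finsupp.lsum k fun x =>
    LinearMap.toSpanSingleton k ((X →₀ k) →ₗ[k] (X →₀ k))
      (Finsupp.lsum k fun y =>
        LinearMap.toSpanSingleton k (X →₀ k) (Finsupp.single (op x y) (1 : k)))

/-- A derivation of the quandle algebra: a linear map satisfying the Leibniz rule. -/
def IsDerivation {k X : Type*} [Field k] (op : X → X → X)
    (D : (X →₀ k) →ₗ[k] (X →₀ k)) : Prop :=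
  ∀ a b : X →₀ k, D (qmul op a b) = qmul op (D a) b + qmul op a (D b)
/- ### qmul computation lemmas -/

theorem qmul_single_gen {k X : Type*} [Field k] (op : X → X → X) (a : X) (r : k) (g : X →₀ k) :
    qmul op (Finsupp.single a r) g = r • Finsupp.mapDomain (op a) g := by
  rw [qmul, Finsupp.lsum_single, LinearMap.toSpanSingleton_apply, LinearMap.smul_apply,
    Finsupp.lsum_apply, Finsupp.mapDomain]
  congr 1
  apply Finsupp.sum_congr
  intro y _
  rw [LinearMap.toSpanSingleton_apply, Finsupp.smul_single', mul_one]

theorem qmul_single_left {k X : Type*} [Field k] (op : X → X → X) (a : X) (g : X →₀ k) :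
    qmul op (Finsupp.single a 1) g = Finsupp.mapDomain (op a) g := by
  rw [qmul_single_gen, one_smul]

theorem qmul_single_single {k X : Type*} [Field k] (op : X → X → X) (a b : X) :
    qmul op (Finsupp.single a 1) (Finsupp.single b (1:k)) = Finsupp.single (op a b) 1 := by
  rw [qmul_single_left, Finsupp.mapDomain_single]

theorem qmul_single_right {k X : Type*} [Field k] (op : X → X → X) (b : X) (f : X →₀ k) :
    qmul op f (Finsupp.single b 1) = Finsupp.mapDomain (fun x => op x b) f := by
  induction f using Finsupp.induction_linear with
  | zero => simp
  | add f g hf hg => rw [map_add, LinearMap.add_apply, hf, hg, Finsupp.mapDomain_add]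
  | single a r =>
      rw [qmul_single_gen, Finsupp.mapDomain_single, Finsupp.mapDomain_single,
        Finsupp.smul_single', mul_one]

/- ### ZMod (2*K) arithmetic lemmas -/

theorem dq_KK (K : ℕ) : (K : ZMod (2*K)) + K = 0 := by
  have h2 : ((2*K : ℕ) : ZMod (2*K)) = 0 := ZMod.natCast_self _
  push_cast at h2
  linear_combination h2

theorem dq_negK (K : ℕ) : -(K : ZMod (2*K)) = K :=
  neg_eq_of_add_eq_zero_left (dq_KK K)

theorem dq_2K (K : ℕ) : (2 : ZMod (2*K)) * (K : ZMod (2*K)) = 0 := by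
  linear_combination dq_KK K

theorem dq_Kne (K : ℕ) (hpos : 0 < K) : (K : ZMod (2*K)) ≠ 0 := by
  rw [Ne, ZMod.natCast_eq_zero_iff]
  intro h
  have := Nat.le_of_dvd hpos h
  omega

theorem dq_kernel (K : ℕ) (hpos : 0 < K) (z : ZMod (2*K)) (h : 2 * z = 0) :
    z = 0 ∨ z = (K : ZMod (2*K)) := by
  haveI : NeZero (2*K) := ⟨by omega⟩
  have hz : ((z.val : ℕ) : ZMod (2*K)) = z := ZMod.natCast_rightInverse z
  have h2 : ((2 * z.val : ℕ) : ZMod (2*K)) = 0 := by push_cast [hz]; exact h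
  rw [ZMod.natCast_eq_zero_iff] at h2
  have hKd : K ∣ z.val := (mul_dvd_mul_iff_left (two_ne_zero)).mp h2
  obtain ⟨c, hc⟩ := hKd
  have hlt : z.val < 2*K := ZMod.val_lt z
  have hc2 : c < 2 := by
    by_contra hcon
    push_neg at hcon
    have : K * 2 ≤ K * c := Nat.mul_le_mul_left K hcon
    omega
  interval_cases c
  · left; rw [← hz, hc]; simp
  · right; rw [← hz, hc]; simp

theorem dq_nohalf (K : ℕ) (hK : Odd K) (hpos : 0 < K) (z : ZMod (2*K)) :
    2 * z ≠ (K : ZMod (2*K)) := by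
  haveI : NeZero (2*K) := ⟨by omega⟩
  intro h
  have hz : ((z.val : ℕ) : ZMod (2*K)) = z := ZMod.natCast_rightInverse z
  have h2 : ((2 * z.val : ℕ) : ZMod (2*K)) = ((K:ℕ) : ZMod (2*K)) := by push_cast [hz]; exact h
  rw [ZMod.natCast_eq_natCast_iff] at h2
  have hmod : (2 * z.val) % (2*K) = K % (2*K) := h2
  have hKlt : K % (2*K) = K := Nat.mod_eq_of_lt (by omega)
  have hdvd : (2:ℕ) ∣ (2 * z.val) % (2*K) :=
    (Nat.dvd_mod_iff ⟨K, rfl⟩).mpr ⟨z.val, rfl⟩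
  rw [hmod, hKlt] at hdvd
  rw [Nat.odd_iff] at hK
  omega

theorem dq_two_eq (K : ℕ) (hK : Odd K) (hpos : 0 < K) (x y : ZMod (2*K)) :
    2 * y = 2 * x ↔ y = x ∨ y = x + K := by
  constructor
  · intro h
    have h0 : 2 * (y - x) = 0 := by rw [mul_sub, h, sub_self]
    rcases dq_kernel K hpos _ h0 with h1 | h1
    · left; linear_combination h1
    · right; linear_combination h1
  · rintro (rfl | rfl)
    · rfl
    · rw [mul_add, dq_2K, add_zero]

theorem dq_parity (K : ℕ) (hK : Odd K) (hpos : 0 < K) (m : ZMod (2*K)) :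
    (∃ y, m = 2*y) ∨ (∃ y, m = 2*y + K) := by
  haveI : NeZero (2*K) := ⟨by omega⟩
  have hm : ((m.val : ℕ) : ZMod (2*K)) = m := ZMod.natCast_rightInverse m
  rcases Nat.even_or_odd m.val with ⟨j, hj⟩ | ⟨j, hj⟩
  · left
    refine ⟨((j:ℕ) : ZMod (2*K)), ?_⟩
    rw [← hm, hj]; push_cast; ring
  · right
    obtain ⟨i, hi⟩ := hK
    refine ⟨(((j + i + 1 : ℕ)) : ZMod (2*K)), ?_⟩
    have key : ((2*(j+i+1) + K : ℕ) : ZMod (2*K)) = ((m.val + 2*K : ℕ) : ZMod (2*K)) := by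
      congr 1; omega
    push_cast [hm] at key
    push_cast
    linear_combination -key - dq_2K K

theorem dq_K_mul (K : ℕ) (hpos : 0 < K) (w : ZMod (2*K)) :
    (K : ZMod (2*K)) * w = 0 ∨ (K : ZMod (2*K)) * w = K := by
  haveI : NeZero (2*K) := ⟨by omega⟩
  have hw : ((w.val : ℕ) : ZMod (2*K)) = w := ZMod.natCast_rightInverse w
  rcases Nat.even_or_odd w.val with ⟨j, hj⟩ | ⟨j, hj⟩
  · left
    rw [← hw]
    have : ((w.val : ℕ) : ZMod (2*K)) = ((j + j : ℕ) : ZMod (2*K)) := by rw [hj, two_mul]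
    rw [this]
    push_cast
    linear_combination (dq_2K K) * (j : ZMod (2*K))
  · right
    rw [← hw]
    have : ((w.val : ℕ) : ZMod (2*K)) = ((2*j + 1 : ℕ) : ZMod (2*K)) := by rw [hj]
    rw [this]
    push_cast
    linear_combination (dq_2K K) * (j : ZMod (2*K))
/-- For the dihedral quandle `Z_n` with `n = 2K`, `K` odd, over a field of characteristic zero,
the matrix coefficients of any derivation satisfy `c_{t+2d}^x = c_t^{2t+2d-x}` and
`c_t^x = -c_t^{x+K}`. -/
theorem dihedral_2k_derivation_symmetries {k : Type*} [Field k] [CharZero k]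
    (K : ℕ) (hK : Odd K) (hpos : 0 < K)
    (D : (ZMod (2 * K) →₀ k) →ₗ[k] (ZMod (2 * K) →₀ k))
    (hD : IsDerivation (fun x y : ZMod (2 * K) => 2 * y - x) D)
    (c : ZMod (2 * K) → ZMod (2 * K) → k)
    (hc : ∀ t u, D (Finsupp.single t 1) u = c t u) :
    ∀ t x d : ZMod (2 * K),
      c (t + 2 * d) x = c t (2 * t + 2 * d - x) ∧
      c t x = - c t (x + (K : ZMod (2 * K))) := by
  haveI : NeZero (2*K) := ⟨by omega⟩
  set op : ZMod (2*K) → ZMod (2*K) → ZMod (2*K) := fun x y => 2 * y - x with hop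
  obtain ⟨P, hP⟩ : ∃ P : ZMod (2*K) → ZMod (2*K) → k,
      ∀ b m, P b m = Finsupp.mapDomain (fun y : ZMod (2*K) => 2*y) (D (Finsupp.single b 1)) m :=
    ⟨_, fun _ _ => rfl⟩
  -- master identity
  have L1 : ∀ a b u : ZMod (2*K), c (2*b - a) u = c a (2*b - u) + P b (u + a) := by
    intro a b u
    have hLeib := hD (Finsupp.single a 1) (Finsupp.single b 1)
    rw [qmul_single_single, qmul_single_right, qmul_single_left] at hLeib
    have happ := congrArg (fun f : ZMod (2*K) →₀ k => f u) hLeib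
    simp only [Finsupp.add_apply] at happ
    -- LHS
    have e1 : (D (Finsupp.single (op a b) 1)) u = c (2*b - a) u := hc _ u
    -- first RHS term
    have hinj1 : Function.Injective (fun x : ZMod (2*K) => op x b) := by
      intro x y hxy
      simp only [hop] at hxy
      linear_combination -hxy
    have e2 : Finsupp.mapDomain (fun x => op x b) (D (Finsupp.single a 1)) u
        = c a (2*b - u) := by
      have h1 : u = (fun x : ZMod (2*K) => op x b) (2*b - u) := by simp only [hop]; ring
      conv_lhs => rw [h1]
      rw [Finsupp.mapDomain_apply hinj1, hc]
    -- second RHS term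
    have e3 : Finsupp.mapDomain (op a) (D (Finsupp.single b 1)) u = P b (u + a) := by
      have hcomp : (op a) = (fun z : ZMod (2*K) => z - a) ∘ (fun y : ZMod (2*K) => 2*y) := rfl
      rw [hcomp, Finsupp.mapDomain_comp]
      have hinj2 : Function.Injective (fun z : ZMod (2*K) => z - a) := by
        intro x y hxy
        simp only at hxy
        linear_combination hxy
      have h1 : u = (fun z : ZMod (2*K) => z - a) (u + a) := by simp only; ring
      conv_lhs => rw [h1]
      rw [Finsupp.mapDomain_apply hinj2, hP]
    rw [e1, e2, e3] at happ
    exact happ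
  -- P evaluated at even points
  have L2 : ∀ b x : ZMod (2*K), P b (2*x) = c b x + c b (x + K) := by
    intro b x
    rw [hP, Finsupp.mapDomain, Finsupp.sum_apply]
    have hxne : x ≠ x + (K : ZMod (2*K)) := by
      intro h
      exact dq_Kne K hpos (by linear_combination -h)
    have hsplit : ∀ y : ZMod (2*K), ∀ r : k,
        (Finsupp.single (2*y) r) (2*x) = (if y = x then r else 0) + (if y = x + K then r else 0) := by
      intro y r
      rw [Finsupp.single_apply]
      by_cases h1 : y = x
      · subst h1
        rw [if_pos rfl, if_pos rfl, if_neg hxne, add_zero]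
      · by_cases h2 : y = x + K
        · subst h2
          rw [if_pos ((dq_two_eq K hK hpos x _).mpr (Or.inr rfl)), if_neg h1, if_pos rfl, zero_add]
        · rw [if_neg, if_neg h1, if_neg h2, add_zero]
          intro hcon
          rcases (dq_two_eq K hK hpos x y).mp hcon with h | h
          · exact h1 h
          · exact h2 h
    rw [Finsupp.sum_congr (g2 := fun y r => (if y = x then r else 0) + (if y = x + K then r else 0))
      (fun y _ => hsplit y _), Finsupp.sum_add,
      Finsupp.sum_ite_self_eq', Finsupp.sum_ite_self_eq', hc, hc]
  -- P vanishes at odd points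
  have L3 : ∀ b x : ZMod (2*K), P b (2*x + K) = 0 := by
    intro b x
    rw [hP, Finsupp.mapDomain, Finsupp.sum_apply]
    have hzero : ∀ y : ZMod (2*K), ∀ r : k, (Finsupp.single (2*y) r) (2*x + K) = 0 := by
      intro y r
      rw [Finsupp.single_apply, if_neg]
      intro hcon
      have : 2 * (y - x) = (K : ZMod (2*K)) := by linear_combination hcon
      exact dq_nohalf K hK hpos _ this
    rw [Finsupp.sum_congr (g2 := fun _ _ => (0:k)) (fun y _ => hzero y _), Finsupp.sum, Finset.sum_const_zero]
  -- diagonal vanishing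
  have L4 : ∀ b : ZMod (2*K), P b (2*b) = 0 := by
    intro b
    have h := L1 b b b
    rw [show 2*b - b = b by ring, show b + b = 2*b by ring] at h
    linear_combination -h
  -- the H function
  obtain ⟨H, hH⟩ : ∃ H : ZMod (2*K) → ZMod (2*K) → k,
      ∀ t x, H t x = c t x + c t (x + K) := ⟨_, fun _ _ => rfl⟩
  have hPH : ∀ b y : ZMod (2*K), P b (2*y) = H b y := by
    intro b y; rw [L2, hH]
  have hHper : ∀ t x : ZMod (2*K), H t (x + K) = H t x := by
    intro t x
    rw [hH, hH, show x + (K : ZMod (2*K)) + K = x by linear_combination dq_KK K]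
    ring
  -- combined identity for H
  have L6 : ∀ a b u : ZMod (2*K),
      H (2*b - a) u = H a (2*b - u) + P b (u + a) + P b (u + a + K) := by
    intro a b u
    have h1 := L1 a b u
    have h2 := L1 a b (u + K)
    rw [show 2*b - (u + (K : ZMod (2*K))) = (2*b - u) + K by linear_combination -dq_KK K,
      show u + (K : ZMod (2*K)) + a = u + a + K by ring] at h2
    rw [hH, hH]
    linear_combination h1 + h2
  -- the key relation
  have L7 : ∀ a p q : ZMod (2*K),
      H (2*p - a) (2*q - a) = H a (2*p - 2*q + a) + H p q := by
    intro a p q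
    have h := L6 a p (2*q - a)
    rw [show 2*q - a + a = 2*q by ring, show 2*p - (2*q - a) = 2*p - 2*q + a by ring,
      hPH, L3, add_zero] at h
    exact h
  -- row relation
  have L8 : ∀ p z : ZMod (2*K), H p (p + 2*z) = H p (p - 2*z) + H p (p + z) := by
    intro p z
    have h := L7 p p (p + z)
    rw [show 2*p - p = p by ring, show 2*(p+z) - p = p + 2*z by ring,
      show 2*p - 2*(p+z) + p = p - 2*z by ring] at h
    exact h
  -- oddness
  have L9 : ∀ p z : ZMod (2*K), H p (p + z) + H p (p - z) = 0 := by
    intro p z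
    have h1 := L8 p z
    have h2 := L8 p (-z)
    rw [show p + 2*(-z) = p - 2*z by ring, show p - 2*(-z) = p + 2*z by ring,
      show p + -z = p - z by ring] at h2
    linear_combination -h1 - h2
  -- scaling
  have L10 : ∀ p z : ZMod (2*K), H p (p + z) = 2 * H p (p + 2*z) := by
    intro p z
    have h1 := L8 p z
    have h2 := L9 p (2*z)
    linear_combination -h1 - h2
  -- iterated scaling
  have L12 : ∀ (j : ℕ) (p z : ZMod (2*K)),
      H p (p + z) = (2^j : k) * H p (p + ((2^j : ℕ) : ZMod (2*K)) * z) := by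
    intro j
    induction j with
    | zero => intro p z; simp
    | succ j ih =>
      intro p z
      have h1 := ih p z
      have h2 := L10 p (((2^j : ℕ) : ZMod (2*K)) * z)
      rw [h1, h2, show 2 * (((2^j : ℕ) : ZMod (2*K)) * z) = ((2^(j+1) : ℕ) : ZMod (2*K)) * z by
        push_cast; ring, pow_succ]
      ring
  -- H vanishes identically
  have hH0 : ∀ p x : ZMod (2*K), H p x = 0 := by
    have hz : ∀ p z : ZMod (2*K), H p (p + z) = 0 := by
      intro p z
      have hcop : Nat.Coprime 2 K := Nat.coprime_two_left.mpr hK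
      have hmod := Nat.ModEq.pow_totient hcop
      have hdpos : 0 < K.totient := Nat.totient_pos.mpr hpos
      have hge : 1 ≤ 2 ^ K.totient := Nat.one_le_two_pow
      obtain ⟨m, hm⟩ : K ∣ 2 ^ K.totient - 1 := (Nat.modEq_iff_dvd' hge).mp hmod.symm
      have hm2 : 2 ^ K.totient = 1 + K * m := by omega
      have hit := L12 K.totient p z
      rw [show ((2 ^ K.totient : ℕ) : ZMod (2*K)) * z
          = z + (K : ZMod (2*K)) * ((m : ZMod (2*K)) * z) by rw [hm2]; push_cast; ring] at hit
      have hcoef : ((2 : k) ^ K.totient : k) - 1 ≠ 0 := by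
        rw [sub_ne_zero]
        intro hcon
        have hcast : ((2 ^ K.totient : ℕ) : k) = ((1 : ℕ) : k) := by push_cast; rw [hcon]
        have h1 := Nat.cast_injective hcast
        have h2 := Nat.one_lt_two_pow_iff.mpr (show K.totient ≠ 0 by omega)
        omega
      have hfin : H p (p + z) = (2 : k) ^ K.totient * H p (p + z) := by
        rcases dq_K_mul K hpos ((m : ZMod (2*K)) * z) with h0 | h0
        · rw [h0, add_zero] at hit; exact hit
        · rw [h0, ← add_assoc, hHper] at hit; exact hit
      have hmul : (((2 : k) ^ K.totient) - 1) * H p (p + z) = 0 := by linear_combination -hfin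
      exact (mul_eq_zero.mp hmul).resolve_left hcoef
    intro p x
    have := hz p (x - p)
    rwa [show p + (x - p) = x by ring] at this
  -- P vanishes identically
  have hP0 : ∀ b m : ZMod (2*K), P b m = 0 := by
    intro b m
    rcases dq_parity K hK hpos m with ⟨y, hy⟩ | ⟨y, hy⟩
    · rw [hy, hPH, hH0]
    · rw [hy, L3]
  -- conclusion
  intro t x d
  constructor
  · have h := L1 t (t + d) x
    rw [show 2*(t + d) - t = t + 2*d by ring, show 2*(t + d) - x = 2*t + 2*d - x by ring,
      hP0, add_zero] at h
    exact h
  · have h := hH0 t x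
    rw [hH] at h
    linear_combination h
end

section
/- Let k be a field of characteristic zero, let K be an odd positive integer, set n = 4K, and let X = Z_n be the dihedral quandle (x▷y = 2y − x in Z_n). Then every derivation D of the quandle algebra k[X], with matrix coefficients defined by D(e_t) = Σ_x c_t^x e_x, satisfies c_{t+K}^{x+K} = c_{t+1}^{x+1} for all t, x ∈ Z_n; equivalently, c_t^x = c_{t+K−1}^{x+K−1} for all t, x ∈ Z_n. -/
lemma qmul_single' {k X : Type*} [Field k] (op : X → X → X) (x y : X) (a b : k) :
    qmul op (Finsupp.single x a) (Finsupp.single y b)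
      = Finsupp.single (op x y) (a * b) := by
  simp [qmul, Finsupp.lsum_single, LinearMap.toSpanSingleton_apply, Finsupp.smul_single,
    smul_eq_mul, mul_one]

lemma qmul_left' {k X : Type*} [Field k] (op : X → X → X) (s : X) (b : X →₀ k) :
    qmul op (Finsupp.single s 1) b = Finsupp.mapDomain (op s) b := by
  induction b using Finsupp.induction_linear with
  | zero => simp
  | add f g hf hg => rw [map_add, hf, hg, Finsupp.mapDomain_add]
  | single y cy => rw [qmul_single', one_mul, Finsupp.mapDomain_single]

lemma qmul_right' {k X : Type*} [Field k] (op : X → X → X) (t : X) (a : X →₀ k) :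
    qmul op a (Finsupp.single t 1) = Finsupp.mapDomain (fun x => op x t) a := by
  induction a using Finsupp.induction_linear with
  | zero => simp
  | add f g hf hg => rw [map_add, LinearMap.add_apply, hf, hg, Finsupp.mapDomain_add]
  | single x cx => rw [qmul_single', mul_one, Finsupp.mapDomain_single]

/-- For the dihedral quandle `Z_n` with `n = 4K`, `K` odd positive, over a field of
characteristic zero, the matrix coefficients of any derivation satisfy
`c_{t+K}^{x+K} = c_{t+1}^{x+1}`; equivalently `c_t^x = c_{t+K-1}^{x+K-1}`. -/
theorem dihedral_4k_odd_derivation_shift {k : Type*} [Field k] [CharZero k]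
    (K : ℕ) (hK : Odd K) (hpos : 0 < K)
    (D : (ZMod (4 * K) →₀ k) →ₗ[k] (ZMod (4 * K) →₀ k))
    (hD : IsDerivation (fun x y : ZMod (4 * K) => 2 * y - x) D)
    (c : ZMod (4 * K) → ZMod (4 * K) → k)
    (hc : ∀ t u, D (Finsupp.single t 1) u = c t u) :
    ∀ t x : ZMod (4 * K),
      c (t + (K : ZMod (4 * K))) (x + (K : ZMod (4 * K))) = c (t + 1) (x + 1) ∧
      c t x = c (t + (K : ZMod (4 * K)) - 1) (x + (K : ZMod (4 * K)) - 1) := by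
  -- Leibniz rule in coordinates
  have hbasic : ∀ s t : ZMod (4 * K),
      D (Finsupp.single (2 * t - s) 1)
        = Finsupp.mapDomain (fun x => 2 * t - x) (D (Finsupp.single s 1))
          + Finsupp.mapDomain (fun y => 2 * y - s) (D (Finsupp.single t 1)) := by
    intro s t
    have h := hD (Finsupp.single s 1) (Finsupp.single t 1)
    rw [qmul_single', one_mul, qmul_right', qmul_left'] at h
    exact h
  -- first mapDomain term evaluates cleanly (injective map)
  have hterm : ∀ (b : ZMod (4 * K) →₀ k) (t u : ZMod (4 * K)),
      Finsupp.mapDomain (fun x : ZMod (4 * K) => 2 * t - x) b u = b (2 * t - u) := by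
    intro b t u
    have hinj : Function.Injective (fun x : ZMod (4 * K) => 2 * t - x) := by
      intro p q hpq
      simpa using sub_right_injective hpq
    have h := Finsupp.mapDomain_apply hinj b (2 * t - u)
    simpa only [show 2 * t - (2 * t - u) = u by ring] using h
  -- second mapDomain term depends only on u + s
  have hmap : ∀ (b : ZMod (4 * K) →₀ k) (s u s' u' : ZMod (4 * K)), u + s = u' + s' →
      Finsupp.mapDomain (fun y => 2 * y - s) b u
        = Finsupp.mapDomain (fun y => 2 * y - s') b u' := by
    have key : ∀ (b : ZMod (4 * K) →₀ k) (s u : ZMod (4 * K)),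
        Finsupp.mapDomain (fun y => 2 * y - s) b u
          = Finsupp.mapDomain (fun y : ZMod (4 * K) => 2 * y) b (u + s) := by
      intro b s u
      have hcomp : (fun y : ZMod (4 * K) => 2 * y - s)
          = (fun w => w - s) ∘ (fun y : ZMod (4 * K) => 2 * y) := rfl
      rw [hcomp, Finsupp.mapDomain_comp]
      have hinj : Function.Injective (fun w : ZMod (4 * K) => w - s) := by
        intro p q hpq
        simpa using sub_left_injective hpq
      have h := Finsupp.mapDomain_apply hinj
        (Finsupp.mapDomain (fun y : ZMod (4 * K) => 2 * y) b) (u + s)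
      simpa only [show u + s - s = u by ring] using h
    intro b s u s' u' h
    rw [key, key, h]
  -- the key relation
  have hrel : ∀ t s u s' u' : ZMod (4 * K), u + s = u' + s' →
      c (2 * t - s) u - c s (2 * t - u) = c (2 * t - s') u' - c s' (2 * t - u') := by
    intro t s u s' u' h
    have h1 := DFunLike.congr_fun (hbasic s t) u
    have h2 := DFunLike.congr_fun (hbasic s' t) u'
    rw [Finsupp.add_apply, hterm, hc, hc] at h1
    rw [Finsupp.add_apply, hterm, hc, hc] at h2
    have hm := hmap (D (Finsupp.single t 1)) s u s' u' h
    linear_combination h1 - h2 + hm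
  -- reflections at t
  have hrefl : ∀ t a b a' b' : ZMod (4 * K), b - a = b' - a' →
      c a b - c (2 * t - a) (2 * t - b) = c a' b' - c (2 * t - a') (2 * t - b') := by
    intro t a b a' b' h
    have h1 := hrel t (2 * t - a) b (2 * t - a') b' (by linear_combination h)
    simpa only [show ∀ x : ZMod (4 * K), 2 * t - (2 * t - x) = x from fun x => by ring]
      using h1
  have h0 : ∀ a b a' b' : ZMod (4 * K), b - a = b' - a' →
      c a b - c (-a) (-b) = c a' b' - c (-a') (-b') := by
    intro a b a' b' h
    have := hrefl 0 a b a' b' h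
    simpa only [show ∀ x : ZMod (4 * K), 2 * 0 - x = -x from fun x => by ring] using this
  have h1 : ∀ a b a' b' : ZMod (4 * K), b - a = b' - a' →
      c a b - c (2 - a) (2 - b) = c a' b' - c (2 - a') (2 - b') := by
    intro a b a' b' h
    have := hrefl 1 a b a' b' h
    simpa only [show ∀ x : ZMod (4 * K), 2 * 1 - x = 2 - x from fun x => by ring] using this
  -- the step difference is translation invariant
  have hstep2 : ∀ a b a' b' : ZMod (4 * K), b - a = b' - a' →
      c a b - c (a + 2) (b + 2) = c a' b' - c (a' + 2) (b' + 2) := by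
    intro a b a' b' hdiff
    have P1 := h0 a b a' b' hdiff
    have P2 := h1 (-a) (-b) (-a') (-b') (by linear_combination -hdiff)
    simp only [show ∀ x : ZMod (4 * K), 2 - -x = x + 2 from fun x => by ring] at P2
    linear_combination P1 + P2
  -- telescoping
  have htel : ∀ (m : ℕ) (a b : ZMod (4 * K)),
      c a b = c (a + ((2 * m : ℕ) : ZMod (4 * K))) (b + ((2 * m : ℕ) : ZMod (4 * K)))
        + (m : k) * (c a b - c (a + 2) (b + 2)) := by
    intro m
    induction m with
    | zero => intro a b; simp
    | succ m ih =>
      intro a b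
      rw [show a + ((2 * (m + 1) : ℕ) : ZMod (4 * K))
            = (a + ((2 * m : ℕ) : ZMod (4 * K))) + 2 by push_cast; ring,
          show b + ((2 * (m + 1) : ℕ) : ZMod (4 * K))
            = (b + ((2 * m : ℕ) : ZMod (4 * K))) + 2 by push_cast; ring]
      have step := hstep2 (a + ((2 * m : ℕ) : ZMod (4 * K)))
        (b + ((2 * m : ℕ) : ZMod (4 * K))) a b (by ring)
      have ihab := ih a b
      rw [Nat.cast_add, Nat.cast_one]
      linear_combination ihab + step
  -- the step is zero
  have hshift2 : ∀ a b : ZMod (4 * K), c a b = c (a + 2) (b + 2) := by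
    intro a b
    have ht := htel (2 * K) a b
    rw [show ((2 * (2 * K) : ℕ) : ZMod (4 * K)) = 0 by
        rw [show 2 * (2 * K) = 4 * K by ring]; exact ZMod.natCast_self _,
      add_zero, add_zero] at ht
    have h2 : ((2 * K : ℕ) : k) * (c a b - c (a + 2) (b + 2)) = 0 := by
      linear_combination -ht
    have hne : ((2 * K : ℕ) : k) ≠ 0 := Nat.cast_ne_zero.mpr (by omega)
    have := (mul_eq_zero.mp h2).resolve_left hne
    exact sub_eq_zero.mp this
  -- iterate
  have hshiftm : ∀ (m : ℕ) (a b : ZMod (4 * K)),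
      c a b = c (a + ((2 * m : ℕ) : ZMod (4 * K))) (b + ((2 * m : ℕ) : ZMod (4 * K))) := by
    intro m
    induction m with
    | zero => intro a b; simp
    | succ m ih =>
      intro a b
      rw [show a + ((2 * (m + 1) : ℕ) : ZMod (4 * K))
            = (a + ((2 * m : ℕ) : ZMod (4 * K))) + 2 by push_cast; ring,
          show b + ((2 * (m + 1) : ℕ) : ZMod (4 * K))
            = (b + ((2 * m : ℕ) : ZMod (4 * K))) + 2 by push_cast; ring]
      rw [ih a b]
      exact hshift2 _ _
  obtain ⟨j, hj⟩ := hK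
  have hKc : ((2 * j : ℕ) : ZMod (4 * K)) = (K : ZMod (4 * K)) - 1 := by
    have h' : ((2 * j + 1 : ℕ) : ZMod (4 * K)) = (K : ZMod (4 * K)) := by rw [← hj]
    push_cast at h' ⊢
    linear_combination h'
  intro t x
  constructor
  · have h := hshiftm j (t + 1) (x + 1)
    rw [show (t + 1) + ((2 * j : ℕ) : ZMod (4 * K)) = t + (K : ZMod (4 * K)) by
          rw [hKc]; ring,
        show (x + 1) + ((2 * j : ℕ) : ZMod (4 * K)) = x + (K : ZMod (4 * K)) by
          rw [hKc]; ring] at h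
    exact h.symm
  · have h := hshiftm j t x
    rw [show t + ((2 * j : ℕ) : ZMod (4 * K)) = t + (K : ZMod (4 * K)) - 1 by
          rw [hKc]; ring,
        show x + ((2 * j : ℕ) : ZMod (4 * K)) = x + (K : ZMod (4 * K)) - 1 by
          rw [hKc]; ring] at h
    exact h
end
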